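/- arXiv:1606.07778 — 2 statements merged into one kernel-verified Lean document; each statement's English description precedes it below -/
import Mathlib

section
/- In a Garside group G, if y is a positive absorbable element and y = u·v·w with u, v, w positive, then v is absorbable. -/
/-- A finite-type Garside structure on a group `G`. -/
structure GarsideStructure (G : Type*) [Group G] where
  /-- the submonoid of positive elements -/
  P : Submonoid G
  /-- the Garside element -/
  Δ : G
  delta_pos : Δ ∈ P
  pos_antisymm : ∀ x : G, x ∈ P → x⁻¹ ∈ P → x = 1
  /-- gcd for the prefix order -/
  wedge : G → G → G
  /-- lcm for the prefix order -/
  vee : G → G → G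
  wedge_le_left : ∀ x y, (wedge x y)⁻¹ * x ∈ P
  wedge_le_right : ∀ x y, (wedge x y)⁻¹ * y ∈ P
  le_wedge : ∀ x y z, z⁻¹ * x ∈ P → z⁻¹ * y ∈ P → z⁻¹ * wedge x y ∈ P
  left_le_vee : ∀ x y, x⁻¹ * vee x y ∈ P
  right_le_vee : ∀ x y, y⁻¹ * vee x y ∈ P
  vee_le : ∀ x y z, x⁻¹ * z ∈ P → y⁻¹ * z ∈ P → (vee x y)⁻¹ * z ∈ P
  /-- gcd for the suffix order -/
  rwedge : G → G → G
  /-- lcm for the suffix order -/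
  rvee : G → G → G
  rwedge_le_left : ∀ x y, x * (rwedge x y)⁻¹ ∈ P
  rwedge_le_right : ∀ x y, y * (rwedge x y)⁻¹ ∈ P
  le_rwedge : ∀ x y z, x * z⁻¹ ∈ P → y * z⁻¹ ∈ P → rwedge x y * z⁻¹ ∈ P
  left_le_rvee : ∀ x y, rvee x y * x⁻¹ ∈ P
  right_le_rvee : ∀ x y, rvee x y * y⁻¹ ∈ P
  rvee_le : ∀ x y z, z * x⁻¹ ∈ P → z * y⁻¹ ∈ P → z * (rvee x y)⁻¹ ∈ P
  /-- the set of simple elements is finite -/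
  simples_finite : {s : G | s ∈ P ∧ s⁻¹ * Δ ∈ P}.Finite
  /-- the simple elements generate the group -/
  simples_generate : Subgroup.closure {s : G | s ∈ P ∧ s⁻¹ * Δ ∈ P} = ⊤
  /-- conjugation by `Δ` preserves `P` -/
  conj_delta : ∀ x : G, x ∈ P ↔ Δ⁻¹ * x * Δ ∈ P
  /-- `P` is noetherian -/
  noetherian : ∀ x ∈ P, x ≠ 1 →
    ∃ N : ℕ, ∀ l : List G, (∀ a ∈ l, a ∈ P ∧ a ≠ 1) → l.prod = x → l.length ≤ N

namespace GarsideStructure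

variable {G : Type*} [Group G] (g : GarsideStructure G)

/-- the prefix order -/
def le (x y : G) : Prop := x⁻¹ * y ∈ g.P

/-- the suffix order: `rle x y` means `x ≽ y`, i.e. `y` is a suffix of `x` -/
def rle (x y : G) : Prop := x * y⁻¹ ∈ g.P

/-- `IsInf x k` : `k` is the infimum of `x`, `max {j : Δ^j ≼ x}` -/
def IsInf (x : G) (k : ℤ) : Prop := g.le (g.Δ ^ k) x ∧ ∀ j : ℤ, g.le (g.Δ ^ j) x → j ≤ k

/-- `IsSup x k` : `k` is the supremum of `x`, `min {j : x ≼ Δ^j}` -/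
def IsSup (x : G) (k : ℤ) : Prop := g.le x (g.Δ ^ k) ∧ ∀ j : ℤ, g.le x (g.Δ ^ j) → k ≤ j

/-- an element of a Garside group is absorbable -/
def Absorbable (y : G) : Prop :=
  (g.IsInf y 0 ∨ g.IsSup y 0) ∧
  ∃ (x : G) (i s : ℤ), g.IsInf x i ∧ g.IsSup x s ∧ g.IsInf (x * y) i ∧ g.IsSup (x * y) s

/-- simple elements: positive prefixes of `Δ` -/
def Simple (s : G) : Prop := s ∈ g.P ∧ g.le s g.Δ

/-- atoms: minimal nontrivial positive elements -/
def Atom (a : G) : Prop := a ∈ g.P ∧ a ≠ 1 ∧ ∀ u v : G, u ∈ g.P → v ∈ g.P → u * v = a → u = 1 ∨ v = 1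

/-- `(s,t)` is left-weighted: `∂s ∧ t = 1` -/
def LeftWeighted (s t : G) : Prop :=
  g.Simple s ∧ g.Simple t ∧ g.wedge (s⁻¹ * g.Δ) t = 1

/-- `(s,t)` is right-weighted: `s ∧^Lsh ∂⁻¹t = 1` -/
def RightWeighted (s t : G) : Prop :=
  g.Simple s ∧ g.Simple t ∧ g.rwedge s (g.Δ * t⁻¹) = 1

/-- `l` is the left normal form (of the element `l.prod`, which has infimum `0`) -/
def IsLNF (l : List G) : Prop :=
  (∀ s ∈ l, g.Simple s ∧ s ≠ 1) ∧ l.Chain' g.LeftWeighted ∧ ∀ h ∈ l.head?, h ≠ g.Δ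

/-- `l` is the right normal form, written in product order (`u = s'_r ⋯ s'_1` corresponds
to the list `[s'_r, …, s'_1]`); the last pair condition says `s'_1 ≠ Δ`. -/
def IsRNF (l : List G) : Prop :=
  (∀ s ∈ l, g.Simple s ∧ s ≠ 1) ∧ l.Chain' g.RightWeighted ∧ ∀ h ∈ l.getLast?, h ≠ g.Δ

/-- the vertex set of the additional length graph: left cosets `gΔ^ℤ` -/
abbrev ALVertex := G ⧸ Subgroup.zpowers g.Δ

/-- one coset can be reached from the other by multiplying the distinguished
representative by a nontrivial proper simple element or by an absorbable element -/
def ALStep (v w : G ⧸ Subgroup.zpowers g.Δ) : Prop :=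
  ∃ d : G, g.IsInf d 0 ∧ (d : G ⧸ Subgroup.zpowers g.Δ) = v ∧
    ((∃ s : G, g.Simple s ∧ s ≠ 1 ∧ s ≠ g.Δ ∧ ((d * s : G) : G ⧸ Subgroup.zpowers g.Δ) = w) ∨
     (∃ y : G, g.Absorbable y ∧ ((d * y : G) : G ⧸ Subgroup.zpowers g.Δ) = w))

/-- the additional length graph -/
def ALGraph : SimpleGraph (G ⧸ Subgroup.zpowers g.Δ) where
  Adj v w := v ≠ w ∧ (g.ALStep v w ∨ g.ALStep w v)
  symm := by constructor; intro v w h; exact ⟨Ne.symm h.1, h.2.symm⟩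
  loopless := by constructor; intro v h; exact h.1 rfl

end GarsideStructure


section Aux

variable {G : Type*} [Group G] (g : GarsideStructure G)

lemma garside_le_trans {p q r : G} (h1 : p⁻¹ * q ∈ g.P) (h2 : q⁻¹ * r ∈ g.P) :
    p⁻¹ * r ∈ g.P := by
  have := mul_mem h1 h2
  rwa [show p⁻¹ * q * (q⁻¹ * r) = p⁻¹ * r by group] at this

lemma garside_conj_pow (n : ℕ) (x : G) :
    x ∈ g.P ↔ (g.Δ ^ n)⁻¹ * x * g.Δ ^ n ∈ g.P := by
  induction n with
  | zero => simp
  | succ k ih =>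
      rw [ih, g.conj_delta ((g.Δ ^ k)⁻¹ * x * g.Δ ^ k),
        show g.Δ⁻¹ * ((g.Δ ^ k)⁻¹ * x * g.Δ ^ k) * g.Δ
            = (g.Δ ^ (k + 1))⁻¹ * x * g.Δ ^ (k + 1) by rw [pow_succ]; group]

lemma garside_conj_zpow (j : ℤ) (x : G) :
    x ∈ g.P ↔ g.Δ ^ (-j) * x * g.Δ ^ j ∈ g.P := by
  rcases le_or_gt 0 j with h | h
  · obtain ⟨n, rfl⟩ := Int.eq_ofNat_of_zero_le h
    rw [garside_conj_pow g n x]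
    rw [show g.Δ ^ (-(n:ℤ)) * x * g.Δ ^ (n:ℤ) = (g.Δ ^ n)⁻¹ * x * g.Δ ^ n by
      rw [zpow_neg, zpow_natCast]]
  · obtain ⟨n, hn⟩ := Int.eq_ofNat_of_zero_le (by omega : (0:ℤ) ≤ -j)
    have key := garside_conj_pow g n (g.Δ ^ (-j) * x * g.Δ ^ j)
    rw [show (g.Δ ^ n : G) = g.Δ ^ (-j) by rw [← zpow_natCast, ← hn],
      show (g.Δ ^ (-j))⁻¹ * (g.Δ ^ (-j) * x * g.Δ ^ j) * g.Δ ^ (-j) = x by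
        rw [zpow_neg]; group] at key
    exact key.symm

end Aux

/-- If `y` is a positive absorbable element and `y = u·v·w` with `u, v, w` positive,
then `v` is absorbable. -/
theorem garside_absorbable_of_factor {G : Type*} [Group G] (g : GarsideStructure G)
    (y u v w : G) (hy : y ∈ g.P) (habs : g.Absorbable y)
    (hu : u ∈ g.P) (hv : v ∈ g.P) (hw : w ∈ g.P) (hfac : y = u * v * w) :
    g.Absorbable v := by
  obtain ⟨hys, x, i, s, hxi, hxs, hxyi, hxys⟩ := habs
  -- basic prefix facts
  have hle_x_xu : x⁻¹ * (x * u) ∈ g.P := by rwa [show x⁻¹ * (x * u) = u by group]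
  have hle_xu_xuv : (x * u)⁻¹ * (x * u * v) ∈ g.P := by
    rwa [show (x * u)⁻¹ * (x * u * v) = v by group]
  have hle_xu_xy : (x * u)⁻¹ * (x * y) ∈ g.P := by
    rw [hfac, show (x * u)⁻¹ * (x * (u * v * w)) = v * w by group]
    exact mul_mem hv hw
  have hle_xuv_xy : (x * u * v)⁻¹ * (x * y) ∈ g.P := by
    rw [hfac, show (x * u * v)⁻¹ * (x * (u * v * w)) = w by group]
    exact hw
  rcases hys with hinf | hsup
  · -- inf(y) = 0 case
    refine ⟨Or.inl ?_, x * u, i, s, ?_, ?_, ?_, ?_⟩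
    · constructor
      · show (g.Δ ^ (0:ℤ))⁻¹ * v ∈ g.P
        simpa using hv
      · intro j hj
        apply hinf.2 j
        show (g.Δ ^ j)⁻¹ * y ∈ g.P
        have h1 : (g.Δ ^ j)⁻¹ * (u * g.Δ ^ j) ∈ g.P := by
          rw [show (g.Δ ^ j)⁻¹ * (u * g.Δ ^ j) = g.Δ ^ (-j) * u * g.Δ ^ j by
            rw [zpow_neg]; group]
          exact (garside_conj_zpow g j u).mp hu
        have h2 : (u * g.Δ ^ j)⁻¹ * (u * v) ∈ g.P := by
          rw [show (u * g.Δ ^ j)⁻¹ * (u * v) = (g.Δ ^ j)⁻¹ * v by group]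
          exact hj
        have h3 : (u * v)⁻¹ * y ∈ g.P := by
          rw [hfac, show (u * v)⁻¹ * (u * v * w) = w by group]; exact hw
        exact garside_le_trans g (garside_le_trans g h1 h2) h3
    · exact ⟨garside_le_trans g hxi.1 hle_x_xu,
        fun j hj => hxyi.2 j (garside_le_trans g hj hle_xu_xy)⟩
    · exact ⟨garside_le_trans g hle_xu_xy hxys.1,
        fun j hj => hxs.2 j (garside_le_trans g hle_x_xu hj)⟩
    · refine ⟨garside_le_trans g (garside_le_trans g hxi.1 hle_x_xu) hle_xu_xuv, ?_⟩
      intro j hj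
      exact hxyi.2 j (garside_le_trans g hj hle_xuv_xy)
    · refine ⟨?_, ?_⟩
      · show (x * u * v)⁻¹ * g.Δ ^ s ∈ g.P
        exact garside_le_trans g hle_xuv_xy hxys.1
      · intro j hj
        exact hxs.2 j (garside_le_trans g hle_x_xu (garside_le_trans g hle_xu_xuv hj))
  · -- sup(y) = 0 case: y = 1, so u = v = w = 1
    have hy1 : y = 1 := by
      apply g.pos_antisymm y hy
      have := hsup.1
      simpa [GarsideStructure.le] using this
    have huvw : u * (v * w) = 1 := by rw [← mul_assoc, ← hfac, hy1]
    have hu1 : u = 1 := by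
      apply g.pos_antisymm u hu
      rw [inv_eq_of_mul_eq_one_right huvw]
      exact mul_mem hv hw
    have hvw : v * w = 1 := by rwa [hu1, one_mul] at huvw
    have hv1 : v = 1 := by
      apply g.pos_antisymm v hv
      rw [inv_eq_of_mul_eq_one_right hvw]
      exact hw
    refine ⟨Or.inr ?_, x, i, s, hxi, hxs, ?_, ?_⟩
    · rw [hv1, ← hy1]; exact hsup
    · rw [hv1, mul_one]; exact hxi
    · rw [hv1, mul_one]; exact hxs
end

section
/- Let G be a Garside group and x ∈ G⁰ a rigid element whose left and right normal forms coincide and whose normal form factors other than the first and last are not single atoms, with first and last factor equal to an atom a. Let y = ∂x. If z ∈ G⁰, k ≥ 1, and y^k ≼ z, then the left normal form of z starts with k copies of the left normal form of y. -/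
namespace GarsideStructure

variable {G : Type*} [Group G] (g : GarsideStructure G)

/-- the right complement `∂ s = s⁻¹ Δ` -/
def del (s : G) : G := s⁻¹ * g.Δ

/-- the conjugation automorphism `τ` -/
def tau (s : G) : G := g.Δ⁻¹ * s * g.Δ

variable {g}

theorem le_def {x y : G} : g.le x y ↔ x⁻¹ * y ∈ g.P := Iff.rfl

theorem le_refl' (x : G) : g.le x x := by
  rw [le_def, inv_mul_cancel]; exact g.P.one_mem

theorem le_trans' {x y z : G} (h1 : g.le x y) (h2 : g.le y z) : g.le x z := by
  rw [le_def] at *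
  have := g.P.mul_mem h1 h2
  rwa [mul_assoc, mul_inv_cancel_left] at this

theorem le_antisymm' {x y : G} (h1 : g.le x y) (h2 : g.le y x) : x = y := by
  rw [le_def] at *
  have h3 : (x⁻¹ * y)⁻¹ ∈ g.P := by rwa [mul_inv_rev, inv_inv]
  have h4 := g.pos_antisymm _ h1 h3
  have h5 : x * (x⁻¹ * y) = x * 1 := by rw [h4]
  simpa using h5.symm

theorem pos_eq_one {c : G} (hc : c ∈ g.P) (h : g.le c 1) : c = 1 := by
  rw [le_def, mul_one] at h
  exact g.pos_antisymm c hc h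

theorem le_one_iff {c : G} : g.le c 1 ↔ c⁻¹ ∈ g.P := by rw [le_def, mul_one]

theorem one_le_iff {c : G} : g.le 1 c ↔ c ∈ g.P := by rw [le_def, inv_one, one_mul]

theorem le_mul_right {x p : G} (hp : p ∈ g.P) : g.le x (x * p) := by
  rw [le_def, inv_mul_cancel_left]; exact hp

theorem le_cancel_left {a x y : G} : g.le (a * x) (a * y) ↔ g.le x y := by
  rw [le_def, le_def, mul_inv_rev, mul_assoc, inv_mul_cancel_left]

theorem mul_eq_one_left {u v : G} (hu : u ∈ g.P) (hv : v ∈ g.P) (h : u * v = 1) : u = 1 := by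
  apply g.pos_antisymm _ hu
  rw [inv_eq_of_mul_eq_one_right h]; exact hv

theorem prod_mem {w : List G} (hw : ∀ s ∈ w, s ∈ g.P) : w.prod ∈ g.P :=
  list_prod_mem hw

theorem prod_eq_one_head {t : G} {w : List G} (ht : t ∈ g.P) (hw : w.prod ∈ g.P)
    (h : t * w.prod = 1) : t = 1 := mul_eq_one_left ht hw h

/-! ### simples, del, tau -/

theorem simple_delta : g.Simple g.Δ := ⟨g.delta_pos, le_refl' _⟩

theorem simple_of_le {c s : G} (hc : c ∈ g.P) (hle : g.le c s) (hs : g.Simple s) :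
    g.Simple c := ⟨hc, le_trans' hle hs.2⟩

theorem del_mem {s : G} (hs : g.Simple s) : g.del s ∈ g.P := hs.2

theorem mul_del (s : G) : s * g.del s = g.Δ := by rw [del, mul_inv_cancel_left]

theorem le_del_delta {s : G} (hs : g.Simple s) : g.le (g.del s) g.Δ := by
  rw [le_def, del, mul_inv_rev, inv_inv]
  exact (g.conj_delta s).1 hs.1

theorem simple_del {s : G} (hs : g.Simple s) : g.Simple (g.del s) :=
  ⟨del_mem hs, le_del_delta hs⟩

theorem del_eq_delta_iff {s : G} : g.del s = g.Δ ↔ s = 1 := by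
  constructor
  · intro h
    have : s⁻¹ * g.Δ * g.Δ⁻¹ = g.Δ * g.Δ⁻¹ := by rw [del] at h; rw [h]
    simpa using this
  · intro h; rw [h, del, inv_one, one_mul]

theorem del_eq_one_iff {s : G} : g.del s = 1 ↔ s = g.Δ := by
  constructor
  · intro h
    have : s * (s⁻¹ * g.Δ) = s * 1 := by rw [del] at h; rw [h]
    simpa using this.symm
  · intro h; rw [h, del, inv_mul_cancel]

theorem tau_mem_iff {s : G} : s ∈ g.P ↔ g.tau s ∈ g.P := by
  rw [tau]; exact g.conj_delta s

theorem le_tau_iff {x y : G} : g.le x y ↔ g.le (g.tau x) (g.tau y) := by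
  rw [le_def, le_def, tau, tau]
  have : (g.Δ⁻¹ * x * g.Δ)⁻¹ * (g.Δ⁻¹ * y * g.Δ) = g.Δ⁻¹ * (x⁻¹ * y) * g.Δ := by group
  rw [this]
  exact g.conj_delta _

theorem tau_one : g.tau (1 : G) = 1 := by rw [tau]; group

theorem tau_eq_one_iff {s : G} : g.tau s = 1 ↔ s = 1 := by
  rw [tau]; constructor
  · intro h
    have : g.Δ * (g.Δ⁻¹ * s * g.Δ) * g.Δ⁻¹ = g.Δ * 1 * g.Δ⁻¹ := by rw [h]
    simpa [mul_assoc] using this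
  · intro h; rw [h]; group

theorem del_del (s : G) : g.del (g.del s) = g.tau s := by rw [del, del, tau]; group

theorem del_tau (s : G) : g.del (g.tau s) = g.tau (g.del s) := by rw [del, del, tau, tau]; group

theorem simple_tau {s : G} (hs : g.Simple s) : g.Simple (g.tau s) := by
  constructor
  · exact tau_mem_iff.1 hs.1
  · have := le_tau_iff.1 hs.2
    rwa [show g.tau g.Δ = g.Δ by rw [tau]; group] at this

theorem le_delta_mul {v : G} (hv : v ∈ g.P) : g.le g.Δ (v * g.Δ) := by
  rw [le_def]
  have := (g.conj_delta v).1 hv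
  rwa [mul_assoc] at this

theorem atom_tau {a : G} (ha : g.Atom a) : g.Atom (g.tau a) := by
  refine ⟨tau_mem_iff.1 ha.1, fun h => ha.2.1 (tau_eq_one_iff.1 h), ?_⟩
  intro u v hu hv huv
  have hu' : g.Δ * u * g.Δ⁻¹ ∈ g.P := by
    have : g.tau (g.Δ * u * g.Δ⁻¹) = u := by rw [tau]; group
    rw [tau_mem_iff, this]; exact hu
  have hv' : g.Δ * v * g.Δ⁻¹ ∈ g.P := by
    have : g.tau (g.Δ * v * g.Δ⁻¹) = v := by rw [tau]; group
    rw [tau_mem_iff, this]; exact hv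
  have hprod : (g.Δ * u * g.Δ⁻¹) * (g.Δ * v * g.Δ⁻¹) = a := by
    have : g.Δ * (u * v) * g.Δ⁻¹ = a := by
      rw [huv, tau]; group
    rw [← this]; group
  rcases ha.2.2 _ _ hu' hv' hprod with h | h
  · left
    have : g.Δ⁻¹ * (g.Δ * u * g.Δ⁻¹ * g.Δ) = g.Δ⁻¹ * (1 * g.Δ) := by rw [h]
    simpa [mul_assoc] using this
  · right
    have : g.Δ⁻¹ * (g.Δ * v * g.Δ⁻¹ * g.Δ) = g.Δ⁻¹ * (1 * g.Δ) := by rw [h]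
    simpa [mul_assoc] using this

theorem atom_le {α c : G} (ha : g.Atom α) (hc : c ∈ g.P) (h : g.le c α) :
    c = 1 ∨ c = α := by
  rw [le_def] at h
  rcases ha.2.2 c (c⁻¹ * α) hc h (by group) with h1 | h1
  · exact Or.inl h1
  · right
    have : c * (c⁻¹ * α) = c * 1 := by rw [h1]
    simpa using this.symm

/-! ### wedge and vee -/

theorem wedge_le_left' (x y : G) : g.le (g.wedge x y) x := g.wedge_le_left x y
theorem wedge_le_right' (x y : G) : g.le (g.wedge x y) y := g.wedge_le_right x y
theorem le_wedge' {x y z : G} (hx : g.le z x) (hy : g.le z y) : g.le z (g.wedge x y) :=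
  g.le_wedge x y z hx hy
theorem left_le_vee' (x y : G) : g.le x (g.vee x y) := g.left_le_vee x y
theorem right_le_vee' (x y : G) : g.le y (g.vee x y) := g.right_le_vee x y
theorem vee_le' {x y z : G} (hx : g.le x z) (hy : g.le y z) : g.le (g.vee x y) z :=
  g.vee_le x y z hx hy

theorem eq_one_of_le_both {c e f : G} (hc : c ∈ g.P) (hw : g.wedge e f = 1)
    (h1 : g.le c e) (h2 : g.le c f) : c = 1 := by
  have := le_wedge' h1 h2
  rw [hw] at this
  exact pos_eq_one hc this

theorem wedge_comm (x y : G) : g.wedge x y = g.wedge y x :=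
  le_antisymm' (le_wedge' (wedge_le_right' x y) (wedge_le_left' x y))
    (le_wedge' (wedge_le_right' y x) (wedge_le_left' y x))

theorem tau_wedge (x y : G) : g.tau (g.wedge x y) = g.wedge (g.tau x) (g.tau y) := by
  apply le_antisymm'
  · exact le_wedge' (le_tau_iff.1 (wedge_le_left' x y)) (le_tau_iff.1 (wedge_le_right' x y))
  · have h1 : ∀ u : G, g.tau (g.Δ * u * g.Δ⁻¹) = u := by intro u; rw [tau]; group
    have h2 : ∀ u v : G, g.le u (g.tau v) → g.le (g.Δ * u * g.Δ⁻¹) v := by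
      intro u v h
      rw [le_tau_iff, h1]
      exact h
    have h3 : g.le (g.Δ * g.wedge (g.tau x) (g.tau y) * g.Δ⁻¹) (g.wedge x y) :=
      le_wedge' (h2 _ _ (wedge_le_left' _ _)) (h2 _ _ (wedge_le_right' _ _))
    rw [le_tau_iff, h1] at h3
    exact h3

theorem lw_wedge {s t : G} (h : g.LeftWeighted s t) : g.wedge (s⁻¹ * g.Δ) t = 1 := h.2.2

/-! ### chains -/

theorem chain_tail_simples {v : G} {w : List G} (h : List.Chain' g.LeftWeighted (v :: w)) :
    ∀ s ∈ w, g.Simple s := by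
  induction w generalizing v with
  | nil => intro s hs; simp at hs
  | cons u w ih =>
    intro s hs
    rcases List.mem_cons.1 hs with rfl | hs
    · exact (List.isChain_cons_cons.1 h).1.2.1
    · exact ih (List.isChain_cons_cons.1 h).2 s hs

/-- key divisibility lemma: a simple prefix of a left-weighted product divides the head -/
theorem head_div : ∀ (L : List G) (t d : G), List.Chain' g.LeftWeighted (t :: L) →
    g.Simple t → g.Simple d → g.le d ((t :: L).prod) → g.le d t := by
  intro L
  induction L with
  | nil =>
    intro t d _ _ _ h
    simpa using h
  | cons u L ih =>
    intro t d hch hst hsd h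
    have hLW : g.LeftWeighted t u := (List.isChain_cons_cons.1 hch).1
    have hrest : (u :: L).prod ∈ g.P :=
      prod_mem (fun s hs => (chain_tail_simples hch s hs).1)
    have hprods : ((t :: u :: L)).prod = t * (u :: L).prod := List.prod_cons
    have hdd_le : g.le (g.vee t d) ((t :: u :: L).prod) := by
      apply vee_le'
      · rw [hprods]; exact le_mul_right hrest
      · exact h
    have he_mem : t⁻¹ * g.vee t d ∈ g.P := g.left_le_vee t d
    have he_rest : g.le (t⁻¹ * g.vee t d) ((u :: L).prod) := by
      have := (le_cancel_left (a := t⁻¹)).2 hdd_le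
      rwa [hprods, inv_mul_cancel_left] at this
    have hveeΔ : g.le (g.vee t d) g.Δ := vee_le' hst.2 hsd.2
    have he_del : g.le (t⁻¹ * g.vee t d) (g.del t) := by
      have := (le_cancel_left (a := t⁻¹)).2 hveeΔ
      rwa [del]
    have he_simple : g.Simple (t⁻¹ * g.vee t d) :=
      simple_of_le he_mem he_del (simple_del hst)
    have he_head : g.le (t⁻¹ * g.vee t d) u :=
      ih u (t⁻¹ * g.vee t d) (List.isChain_cons_cons.1 hch).2 hLW.2.1 he_simple he_rest
    have he_one : t⁻¹ * g.vee t d = 1 :=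
      eq_one_of_le_both he_mem (lw_wedge hLW) he_del he_head
    have : g.vee t d = t := by
      have h5 : t * (t⁻¹ * g.vee t d) = t * 1 := by rw [he_one]
      simpa using h5
    rw [← this]
    exact right_le_vee' t d

/-- all entries of a left-weighted chain with head `≠ Δ` are `≠ Δ` -/
theorem chain_ne_delta : ∀ (L : List G), List.Chain' g.LeftWeighted L →
    (∀ h ∈ L.head?, h ≠ g.Δ) → ∀ s ∈ L, s ≠ g.Δ := by
  intro L
  induction L with
  | nil => intro _ _ s hs; simp at hs
  | cons t L ih =>
    intro hch hhd s hs
    have ht : t ≠ g.Δ := hhd t rfl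
    rcases List.mem_cons.1 hs with rfl | hs
    · exact ht
    · apply ih hch.tail _ s hs
      intro h hh
      cases L with
      | nil => simp at hh
      | cons u L' =>
        have hLW : g.LeftWeighted t u := (List.isChain_cons_cons.1 hch).1
        simp only [List.head?_cons, Option.mem_def, Option.some.injEq] at hh
        subst hh
        intro hu
        -- u = Δ leads to del t = 1, i.e. t = Δ
        apply ht
        rw [← del_eq_one_iff]
        apply pos_eq_one (del_mem hLW.1)
        have h6 : g.le (g.del t) (g.wedge (t⁻¹ * g.Δ) u) := by
          rw [hu]
          exact le_wedge' (le_refl' _) (le_del_delta hLW.1)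
        rwa [lw_wedge hLW] at h6

/-- uniqueness of left normal forms (no condition on the head is needed) -/
theorem lnf_unique : ∀ (l1 l2 : List G), List.Chain' g.LeftWeighted l1 →
    List.Chain' g.LeftWeighted l2 → (∀ s ∈ l1, g.Simple s ∧ s ≠ 1) →
    (∀ s ∈ l2, g.Simple s ∧ s ≠ 1) → l1.prod = l2.prod → l1 = l2 := by
  intro l1
  induction l1 with
  | nil =>
    intro l2 _ _ _ h2 hprod
    cases l2 with
    | nil => rfl
    | cons t l2' =>
      exfalso
      apply (h2 t (List.mem_cons_self)).2
      apply prod_eq_one_head (h2 t (List.mem_cons_self)).1.1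
        (prod_mem fun s hs => (h2 s (List.mem_cons_of_mem t hs)).1.1)
      rw [← List.prod_cons, ← hprod, List.prod_nil]
  | cons s l1' ih =>
    intro l2 hch1 hch2 h1 h2 hprod
    cases l2 with
    | nil =>
      exfalso
      apply (h1 s (List.mem_cons_self)).2
      apply prod_eq_one_head (h1 s (List.mem_cons_self)).1.1
        (prod_mem fun u hu => (h1 u (List.mem_cons_of_mem s hu)).1.1)
      rw [← List.prod_cons, hprod, List.prod_nil]
    | cons t l2' =>
      have hst : s = t := by
        apply le_antisymm'
        · apply head_div l2' t s hch2 (h2 t (List.mem_cons_self)).1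
            (h1 s (List.mem_cons_self)).1
          rw [← hprod, List.prod_cons]
          exact le_mul_right (prod_mem fun u hu => (h1 u (List.mem_cons_of_mem s hu)).1.1)
        · apply head_div l1' s t hch1 (h1 s (List.mem_cons_self)).1
            (h2 t (List.mem_cons_self)).1
          rw [hprod, List.prod_cons]
          exact le_mul_right (prod_mem fun u hu => (h2 u (List.mem_cons_of_mem t hu)).1.1)
      subst hst
      have htails : l1'.prod = l2'.prod := by
        rw [List.prod_cons, List.prod_cons] at hprod
        exact mul_left_cancel hprod
      rw [ih l2' hch1.tail hch2.tail (fun u hu => h1 u (List.mem_cons_of_mem s hu))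
        (fun u hu => h2 u (List.mem_cons_of_mem s hu)) htails]

/-! ### the pushing lemma -/

theorem push_lemma : ∀ (w : List G) (u₁ v c : G),
    List.Chain' g.LeftWeighted (v :: u₁ :: w) →
    (∀ z ∈ (u₁ :: w).getLast?, g.Atom (g.del z)) →
    c ∈ g.P → c ≠ 1 → g.le c (g.del v) →
    g.le g.Δ (g.vee c ((u₁ :: w).prod)) := by
  intro w
  induction w with
  | nil =>
    intro u₁ v c hch hat hc hcne hcdel
    have hLW : g.LeftWeighted v u₁ := (List.isChain_cons_cons.1 hch).1
    have hsv : g.Simple v := hLW.1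
    have hsu : g.Simple u₁ := hLW.2.1
    have hcs : g.Simple c := simple_of_le hc hcdel (simple_del hsv)
    have hu₁d : g.le u₁ (g.vee c u₁) := right_le_vee' c u₁
    have hdΔ : g.le (g.vee c u₁) g.Δ := vee_le' hcs.2 hsu.2
    have hc₁P : u₁⁻¹ * g.vee c u₁ ∈ g.P := hu₁d
    have hc₁del : g.le (u₁⁻¹ * g.vee c u₁) (g.del u₁) := by
      have := (le_cancel_left (a := u₁⁻¹)).2 hdΔ
      rwa [del]
    have hc₁ne : u₁⁻¹ * g.vee c u₁ ≠ 1 := by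
      intro h1
      apply hcne
      have hdu : g.vee c u₁ = u₁ := by
        have h5 : u₁ * (u₁⁻¹ * g.vee c u₁) = u₁ * 1 := by rw [h1]
        simpa using h5
      have hcu : g.le c u₁ := by rw [← hdu]; exact left_le_vee' c u₁
      exact eq_one_of_le_both hc (lw_wedge hLW) hcdel hcu
    have hatom : g.Atom (g.del u₁) := hat u₁ (by simp)
    rcases atom_le hatom hc₁P hc₁del with h1 | h1
    · exact absurd h1 hc₁ne
    · have : g.vee c u₁ = g.Δ := by
        have h5 : u₁ * (u₁⁻¹ * g.vee c u₁) = u₁ * g.del u₁ := by rw [h1]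
        rw [mul_inv_cancel_left, mul_del] at h5
        exact h5
      have hgoal : g.le g.Δ (g.vee c u₁) := by rw [this]; exact le_refl' _
      simpa using hgoal
  | cons u₂ w' ih =>
    intro u₁ v c hch hat hc hcne hcdel
    have hLW : g.LeftWeighted v u₁ := (List.isChain_cons_cons.1 hch).1
    have hsv : g.Simple v := hLW.1
    have hsu : g.Simple u₁ := hLW.2.1
    have hcs : g.Simple c := simple_of_le hc hcdel (simple_del hsv)
    have hdΔ : g.le (g.vee c u₁) g.Δ := vee_le' hcs.2 hsu.2
    have hc₁P : u₁⁻¹ * g.vee c u₁ ∈ g.P := right_le_vee' c u₁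
    have hc₁del : g.le (u₁⁻¹ * g.vee c u₁) (g.del u₁) := by
      have := (le_cancel_left (a := u₁⁻¹)).2 hdΔ
      rwa [del]
    have hc₁ne : u₁⁻¹ * g.vee c u₁ ≠ 1 := by
      intro h1
      apply hcne
      have hdu : g.vee c u₁ = u₁ := by
        have h5 : u₁ * (u₁⁻¹ * g.vee c u₁) = u₁ * 1 := by rw [h1]
        simpa using h5
      have hcu : g.le c u₁ := by rw [← hdu]; exact left_le_vee' c u₁
      exact eq_one_of_le_both hc (lw_wedge hLW) hcdel hcu
    have hch' : List.Chain' g.LeftWeighted (u₁ :: u₂ :: w') := hch.tail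
    have hat' : ∀ z ∈ (u₂ :: w').getLast?, g.Atom (g.del z) := by
      intro z hz
      apply hat
      rwa [List.getLast?_cons_cons]
    have hIH : g.le g.Δ (g.vee (u₁⁻¹ * g.vee c u₁) ((u₂ :: w').prod)) :=
      ih u₂ u₁ (u₁⁻¹ * g.vee c u₁) hch' hat' hc₁P hc₁ne hc₁del
    -- now bound the inner vee by u₁⁻¹ * M where M = vee c ((u₁::u₂::w').prod)
    have hW : (u₂ :: w').prod ∈ g.P :=
      prod_mem (fun s hs => (chain_tail_simples hch' s hs).1)
    have hprods : (u₁ :: u₂ :: w').prod = u₁ * (u₂ :: w').prod := List.prod_cons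
    have hdM : g.le (g.vee c u₁) (g.vee c ((u₁ :: u₂ :: w').prod)) := by
      apply vee_le'
      · exact left_le_vee' _ _
      · apply le_trans' _ (right_le_vee' c ((u₁ :: u₂ :: w').prod))
        rw [hprods]
        exact le_mul_right hW
    have hc₁M : g.le (u₁⁻¹ * g.vee c u₁) (u₁⁻¹ * g.vee c ((u₁ :: u₂ :: w').prod)) :=
      (le_cancel_left (a := u₁⁻¹)).2 hdM
    have hWM : g.le ((u₂ :: w').prod) (u₁⁻¹ * g.vee c ((u₁ :: u₂ :: w').prod)) := by
      rw [← le_cancel_left (a := u₁), mul_inv_cancel_left, ← hprods]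
      exact right_le_vee' _ _
    have hvee : g.le (g.vee (u₁⁻¹ * g.vee c u₁) ((u₂ :: w').prod))
        (u₁⁻¹ * g.vee c ((u₁ :: u₂ :: w').prod)) := vee_le' hc₁M hWM
    have hΔ' : g.le g.Δ (u₁⁻¹ * g.vee c ((u₁ :: u₂ :: w').prod)) := le_trans' hIH hvee
    have hΔ'' : g.le (u₁ * g.Δ) (g.vee c ((u₁ :: u₂ :: w').prod)) := by
      rw [← le_cancel_left (a := u₁⁻¹), inv_mul_cancel_left]
      exact hΔ'
    exact le_trans' (le_delta_mul hsu.1) hΔ''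

/-! ### matching one copy -/

theorem match_copy : ∀ (V L : List G) (R : G),
    (∀ s ∈ V, g.Simple s ∧ s ≠ 1) → List.Chain' g.LeftWeighted V →
    (∀ z ∈ V.getLast?, g.Atom (g.del z)) →
    (∀ t ∈ L, g.Simple t ∧ t ≠ g.Δ) → List.Chain' g.LeftWeighted L →
    R ∈ g.P → g.le (V.prod * R) L.prod → ∃ L'', L = V ++ L'' := by
  intro V
  induction V with
  | nil => exact fun L R _ _ _ _ _ _ _ => ⟨L, rfl⟩
  | cons v V' ihV =>
    intro L R hV hchV hatV hL hchL hR hle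
    have hv : g.Simple v ∧ v ≠ 1 := hV v (List.mem_cons_self)
    have hV'P : V'.prod ∈ g.P := prod_mem fun s hs => (hV s (List.mem_cons_of_mem v hs)).1.1
    have hVP : (v :: V').prod ∈ g.P := prod_mem fun s hs => (hV s hs).1.1
    cases L with
    | nil =>
      exfalso
      apply hv.2
      apply mul_eq_one_left hv.1.1 (g.P.mul_mem hV'P hR)
      have h1 : (v :: V').prod * R = 1 := by
        apply g.pos_antisymm _ (g.P.mul_mem hVP hR)
        simpa [le_def] using hle
      rw [List.prod_cons, mul_assoc] at h1
      exact h1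
    | cons t L' =>
      have ht : g.Simple t ∧ t ≠ g.Δ := hL t (List.mem_cons_self)
      have hvL : g.le v ((t :: L').prod) := by
        apply le_trans' _ hle
        rw [List.prod_cons, mul_assoc]
        exact le_mul_right (g.P.mul_mem hV'P hR)
      have hvt : g.le v t := head_div L' t v hchL ht.1 hv.1 hvL
      have hcdel : g.le (v⁻¹ * t) (g.del v) := by
        rw [le_def, del]
        have h2 : (v⁻¹ * t)⁻¹ * (v⁻¹ * g.Δ) = t⁻¹ * g.Δ := by group
        rw [h2]
        exact ht.1.2
      have hLp : (t :: L').prod = t * L'.prod := List.prod_cons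
      have hL'P : L'.prod ∈ g.P := prod_mem fun s hs => (hL s (List.mem_cons_of_mem t hs)).1.1
      -- main claim: t = v
      have htv : t = v := by
        by_cases hc1 : v⁻¹ * t = 1
        · have h5 : v * (v⁻¹ * t) = v * 1 := by rw [hc1]
          simpa using h5
        exfalso
        cases V' with
        | nil =>
          -- last position: del v is an atom
          have hatom : g.Atom (g.del v) := hatV v (by simp)
          rcases atom_le hatom hvt hcdel with h1 | h1
          · exact hc1 h1
          · apply ht.2
            have h5 : v * (v⁻¹ * t) = v * g.del v := by rw [h1]
            rw [mul_inv_cancel_left, mul_del] at h5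
            exact h5
        | cons u₁ w =>
          -- interior position: push c through the tail and get Δ
          have hpush : g.le g.Δ (g.vee (v⁻¹ * t) ((u₁ :: w).prod)) :=
            push_lemma w u₁ v (v⁻¹ * t) hchV
              (fun z hz => hatV z (by rwa [List.getLast?_cons_cons])) hvt hc1 hcdel
          have hbound : g.le (g.vee (v⁻¹ * t) ((u₁ :: w).prod)) (v⁻¹ * (t :: L').prod) := by
            apply vee_le'
            · rw [← le_cancel_left (a := v), mul_inv_cancel_left, mul_inv_cancel_left]
              rw [hLp]
              exact le_mul_right hL'P
            · rw [← le_cancel_left (a := v), mul_inv_cancel_left, ← List.prod_cons]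
              apply le_trans' _ hle
              exact le_mul_right hR
          have hΔ : g.le g.Δ ((t :: L').prod) := by
            have h1 : g.le g.Δ (v⁻¹ * (t :: L').prod) := le_trans' hpush hbound
            have h2 : g.le (v * g.Δ) ((t :: L').prod) := by
              rw [← le_cancel_left (a := v⁻¹), inv_mul_cancel_left]
              exact h1
            exact le_trans' (le_delta_mul hv.1.1) h2
          have hΔt : g.le g.Δ t := head_div L' t g.Δ hchL ht.1 simple_delta hΔ
          exact ht.2 (le_antisymm' ht.1.2 hΔt)
      subst htv
      -- recurse on the tails
      have hle' : g.le (V'.prod * R) L'.prod := by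
        rw [le_def]
        have h2 : (V'.prod * R)⁻¹ * L'.prod
            = ((t :: V').prod * R)⁻¹ * ((t :: L').prod) := by
          rw [List.prod_cons, List.prod_cons]; group
        rw [h2]
        exact hle
      rcases V' with _ | ⟨u₁, w⟩
      · exact ⟨L', rfl⟩
      obtain ⟨L'', rfl⟩ := ihV L' R (fun s hs => hV s (List.mem_cons_of_mem t hs)) hchV.tail
        (fun z hz => hatV z (by rwa [List.getLast?_cons_cons]))
        (fun s hs => hL s (List.mem_cons_of_mem t hs)) hchL.tail hR hle'
      exact ⟨L'', rfl⟩

/-! ### matching all copies -/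

theorem match_pow (ly : List G) (hf : ∀ s ∈ ly, g.Simple s ∧ s ≠ 1)
    (hch : List.Chain' g.LeftWeighted ly) (hla : ∀ z ∈ ly.getLast?, g.Atom (g.del z)) :
    ∀ (k : ℕ) (L : List G), (∀ t ∈ L, g.Simple t ∧ t ≠ g.Δ) →
    List.Chain' g.LeftWeighted L → g.le (ly.prod ^ k) L.prod →
    (List.replicate k ly).flatten <+: L := by
  intro k
  induction k with
  | zero => intro L _ _ _; simp
  | succ k ih =>
    intro L hL hchL hle
    have hlyP : ly.prod ∈ g.P := prod_mem fun s hs => (hf s hs).1.1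
    have hle1 : g.le (ly.prod * ly.prod ^ k) L.prod := by
      rw [← pow_succ']
      exact hle
    obtain ⟨L'', rfl⟩ := match_copy ly L (ly.prod ^ k) hf hch hla hL hchL
      (pow_mem hlyP k) hle1
    have hle2 : g.le (ly.prod ^ k) L''.prod := by
      rw [le_def]
      have h2 : (ly.prod ^ k)⁻¹ * L''.prod = (ly.prod ^ (k + 1))⁻¹ * ((ly ++ L'').prod) := by
        rw [List.prod_append, pow_succ']
        group
      rw [h2]
      exact hle
    have hpre : (List.replicate k ly).flatten <+: L'' :=
      ih L'' (fun t ht => hL t (List.mem_append_right ly ht))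
        (List.isChain_append.1 hchL).2.1 hle2
    obtain ⟨rest, hrest⟩ := hpre
    refine ⟨rest, ?_⟩
    rw [List.replicate_succ, List.flatten_cons, List.append_assoc, hrest]

/-! ### the `∂`-twisted list computing the normal form of `∂x` -/

theorem tau_mul (u v : G) : g.tau (u * v) = g.tau u * g.tau v := by
  rw [tau, tau, tau]; group

theorem prod_map_tau : ∀ w : List G, (w.map g.tau).prod = g.tau w.prod := by
  intro w
  induction w with
  | nil => simp [tau_one]
  | cons u w ih => rw [List.map_cons, List.prod_cons, List.prod_cons, ih, tau_mul]

theorem getLast?_map_tau (w : List G) : (w.map g.tau).getLast? = w.getLast?.map g.tau := by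
  rw [← List.head?_reverse, ← List.map_reverse, List.head?_map, List.head?_reverse]

theorem getLast?_cons_ne {a : G} {l : List G} (hl : l ≠ []) :
    (a :: l).getLast? = l.getLast? := by
  cases l with
  | nil => exact absurd rfl hl
  | cons b l' => rw [List.getLast?_cons_cons]

/-- the list `[∂s_n, τ∂s_{n-1}, …, τ^{n-1}∂s_1]` computed from the reversed list
`[s_n, …, s_1]` -/
def dlist (g : GarsideStructure G) : List G → List G
  | [] => []
  | s :: t => g.del s :: (dlist g t).map g.tau

theorem dlist_nil : dlist g [] = [] := rfl

theorem dlist_cons (s : G) (t : List G) :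
    dlist g (s :: t) = g.del s :: (dlist g t).map g.tau := rfl

theorem dlist_ne_nil {m : List G} (hm : m ≠ []) : dlist g m ≠ [] := by
  cases m with
  | nil => exact absurd rfl hm
  | cons s t => rw [dlist_cons]; simp

theorem dlist_head? : ∀ m : List G, (dlist g m).head? = m.head?.map g.del := by
  intro m
  cases m with
  | nil => rfl
  | cons s t => rw [dlist_cons]; rfl

theorem dlist_mem : ∀ m : List G, (∀ s ∈ m, g.Simple s ∧ s ≠ g.Δ) →
    ∀ z ∈ dlist g m, g.Simple z ∧ z ≠ 1 := by
  intro m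
  induction m with
  | nil => intro _ z hz; rw [dlist_nil] at hz; simp at hz
  | cons s t ih =>
    intro hm z hz
    rw [dlist_cons] at hz
    rcases List.mem_cons.1 hz with rfl | hz
    · have hs := hm s (List.mem_cons_self)
      exact ⟨simple_del hs.1, fun h => hs.2 (del_eq_one_iff.1 h)⟩
    · obtain ⟨z', hz', rfl⟩ := List.mem_map.1 hz
      have h := ih (fun u hu => hm u (List.mem_cons_of_mem s hu)) z' hz'
      exact ⟨simple_tau h.1, fun hh => h.2 (tau_eq_one_iff.1 hh)⟩

theorem dlist_prod : ∀ m : List G, (dlist g m).prod = (m.reverse.prod)⁻¹ * g.Δ ^ m.length := by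
  intro m
  induction m with
  | nil => simp [dlist_nil]
  | cons s t ih =>
    rw [dlist_cons, List.prod_cons, prod_map_tau, ih, List.reverse_cons, List.prod_append,
      List.length_cons]
    rw [del, tau]
    simp only [List.prod_cons, List.prod_nil, mul_one, mul_inv_rev]
    rw [pow_succ]
    group

theorem lw_tau {u v : G} (h : g.LeftWeighted u v) : g.LeftWeighted (g.tau u) (g.tau v) := by
  refine ⟨simple_tau h.1, simple_tau h.2.1, ?_⟩
  have h1 : (g.tau u)⁻¹ * g.Δ = g.tau (u⁻¹ * g.Δ) := by rw [tau, tau]; group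
  rw [h1, ← tau_wedge, h.2.2, tau_one]

theorem dlist_chain : ∀ m : List G, List.Chain' (fun a b => g.LeftWeighted b a) m →
    (∀ s ∈ m, g.Simple s) → List.Chain' g.LeftWeighted (dlist g m) := by
  intro m
  induction m with
  | nil => intro _ _; rw [dlist_nil]; exact List.isChain_nil
  | cons s t ih =>
    intro hch hsm
    rw [dlist_cons]
    refine List.isChain_cons.2 ?_
    constructor
    · -- head pair
      intro b hb
      rw [List.head?_map, dlist_head?] at hb
      cases t with
      | nil => simp at hb
      | cons s' t' =>
        simp only [List.head?_cons, Option.map_some, Option.mem_def, Option.some.injEq] at hb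
        subst hb
        have hpair : g.LeftWeighted s' s := (List.isChain_cons_cons.1 hch).1
        refine ⟨simple_del (hsm s (List.mem_cons_self)),
          simple_tau (simple_del (hsm s' (List.mem_cons_of_mem _ (List.mem_cons_self)))), ?_⟩
        have h1 : (g.del s)⁻¹ * g.Δ = g.tau s := by rw [del, tau]; group
        rw [h1]
        have h3 : g.wedge (g.tau s) (g.tau (g.del s')) = g.tau (g.wedge s (g.del s')) :=
          (tau_wedge s (g.del s')).symm
        rw [h3, wedge_comm]
        have h4 : g.wedge (g.del s') s = 1 := by
          have := lw_wedge hpair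
          rwa [del]
        rw [h4, tau_one]
    · -- chain of the mapped tail
      rw [List.isChain_map]
      apply List.IsChain.imp (fun a b hab => lw_tau hab)
      exact ih (List.IsChain.tail hch) (fun u hu => hsm u (List.mem_cons_of_mem s hu))

theorem dlist_getLast_atom : ∀ m : List G, (∀ z ∈ m.getLast?, g.Atom z) →
    ∀ z ∈ (dlist g m).getLast?, g.Atom (g.del z) := by
  intro m
  induction m with
  | nil => intro _ z hz; rw [dlist_nil] at hz; simp at hz
  | cons s t ih =>
    intro hm z hz
    rw [dlist_cons] at hz
    cases t with
    | nil =>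
      simp only [dlist_nil, List.map_nil, List.getLast?_singleton, Option.mem_def,
        Option.some.injEq] at hz
      subst hz
      rw [del_del]
      exact atom_tau (hm s (by simp))
    | cons s' t' =>
      have hne : (dlist g (s' :: t')).map g.tau ≠ [] := by
        rw [dlist_cons]; simp
      rw [getLast?_cons_ne hne, getLast?_map_tau] at hz
      cases h' : (dlist g (s' :: t')).getLast? with
      | none => rw [h'] at hz; simp at hz
      | some z' =>
        rw [h'] at hz
        simp only [Option.map_some, Option.mem_def, Option.some.injEq] at hz
        subst hz
        rw [del_tau]
        apply atom_tau
        apply ih _ z' h'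
        intro w hw
        apply hm
        rwa [getLast?_cons_ne (by simp : (s' :: t') ≠ [])]

theorem zpow_nonneg_mem {m : ℤ} (hm : 0 ≤ m) : g.Δ ^ m ∈ g.P := by
  lift m to ℕ using hm
  rw [zpow_natCast]
  exact pow_mem g.delta_pos m

end GarsideStructure

/-- Lemma "L:InitialFinalFactors"(b): with `x` as before (rigid, coinciding normal forms,
no interior factor a single atom, first and last factor the atom `a`) and `y = ∂x`:
if `z ∈ G⁰`, `k ≥ 1` and `y^k ≼ z`, then the left normal form of `z` starts with `k` copies
of the left normal form of `y`. -/
theorem garside_lnf_starts_with_complement_power {G : Type*} [Group G]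
    (g : GarsideStructure G)
    (x : G) (hx : g.IsInf x 0) (a : G) (ha : g.Atom a)
    (l : List G) (hlnf : g.IsLNF l) (hrnf : g.IsRNF l) (hprod : l.prod = x)
    (hne : l ≠ []) (hhead : l.head? = some a) (hlast : l.getLast? = some a)
    (hrigid : g.LeftWeighted a a)
    (hinterior : ∀ s ∈ (l.drop 1).dropLast, ¬ g.Atom s)
    (r : ℤ) (hsup : g.IsSup x r)
    (y : G) (hy : y = x⁻¹ * g.Δ ^ r)
    (z : G) (hz : g.IsInf z 0) (k : ℕ) (hk : 1 ≤ k) (hdvd : g.le (y ^ k) z) :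
    ∀ L ly : List G, g.IsLNF L → L.prod = z → g.IsLNF ly → ly.prod = y →
      (List.replicate k ly).flatten <+: L := by
  intro L ly hLlnf hLprod hlylnf hlyprod
  open GarsideStructure in
  have hane1 : a ≠ 1 := ha.2.1
  have haΔ : a ≠ g.Δ := hlnf.2.2 a hhead
  have hfacl := hlnf.1
  have hchl := hlnf.2.1
  have hallne : ∀ s ∈ l, s ≠ g.Δ := GarsideStructure.chain_ne_delta l hchl hlnf.2.2
  have hmmem : ∀ s ∈ l.reverse, g.Simple s ∧ s ≠ g.Δ := fun s hs =>
    ⟨(hfacl s (List.mem_reverse.1 hs)).1, hallne s (List.mem_reverse.1 hs)⟩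
  have hmchain : List.Chain' (fun u v => g.LeftWeighted v u) l.reverse := by
    refine List.isChain_reverse.2 ?_
    exact hchl
  set dl := GarsideStructure.dlist g l.reverse with hdl
  have hdlmem : ∀ z ∈ dl, g.Simple z ∧ z ≠ 1 :=
    GarsideStructure.dlist_mem l.reverse hmmem
  have hdlchain : List.Chain' g.LeftWeighted dl :=
    GarsideStructure.dlist_chain l.reverse hmchain (fun s hs => (hmmem s hs).1)
  have hdlprod : dl.prod = l.prod⁻¹ * g.Δ ^ l.length := by
    rw [hdl, GarsideStructure.dlist_prod, List.reverse_reverse, List.length_reverse]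
  have hdllast : ∀ w ∈ dl.getLast?, g.Atom (g.del w) := by
    apply GarsideStructure.dlist_getLast_atom
    intro w hw
    rw [List.getLast?_reverse, hhead] at hw
    simp only [Option.mem_def, Option.some.injEq] at hw
    subst hw
    exact ha
  have hdlhead : dl.head? = some (g.del a) := by
    rw [hdl, GarsideStructure.dlist_head?, List.head?_reverse, hlast]
    rfl
  -- supremum of x is l.length
  have hxup : g.le x (g.Δ ^ (l.length : ℤ)) := by
    rw [GarsideStructure.le_def, zpow_natCast, ← hprod, ← hdlprod]
    exact GarsideStructure.prod_mem (fun w hw => (hdlmem w hw).1.1)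
  have hmin : ∀ j : ℤ, g.le x (g.Δ ^ j) → (l.length : ℤ) ≤ j := by
    intro j hj
    by_contra hlt
    push_neg at hlt
    have hj' : g.le x (g.Δ ^ ((l.length : ℤ) - 1)) := by
      apply GarsideStructure.le_trans' hj
      rw [GarsideStructure.le_def, ← zpow_neg, ← zpow_add]
      apply GarsideStructure.zpow_nonneg_mem
      omega
    have hΔdl : g.le g.Δ dl.prod := by
      rw [GarsideStructure.le_def] at hj' ⊢
      have h1 := (g.conj_delta _).1 hj'
      rw [hdlprod]
      have h2 : g.Δ⁻¹ * (x⁻¹ * g.Δ ^ ((l.length : ℤ) - 1)) * g.Δ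
          = g.Δ⁻¹ * (x⁻¹ * g.Δ ^ (l.length : ℤ)) := by
        rw [zpow_sub_one]
        group
      rw [h2, zpow_natCast] at h1
      rw [hprod]
      exact h1
    -- Δ divides the head of dl, which is del a; contradiction
    have hamem : a ∈ l := by
      cases l with
      | nil => exact absurd rfl hne
      | cons a0 l0 =>
        simp only [List.head?_cons, Option.some.injEq] at hhead
        rw [← hhead]
        exact List.mem_cons_self
    have hsa : g.Simple a := (hfacl a hamem).1
    cases hdlc : dl with
    | nil => rw [hdlc] at hdlhead; simp at hdlhead
    | cons b rest =>
      rw [hdlc] at hdlhead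
      simp only [List.head?_cons, Option.some.injEq] at hdlhead
      rw [hdlc] at hΔdl hdlchain hdlmem
      have hb : g.Simple b := (hdlmem b (List.mem_cons_self)).1
      have hΔb : g.le g.Δ b :=
        GarsideStructure.head_div rest b g.Δ hdlchain hb
          GarsideStructure.simple_delta hΔdl
      rw [hdlhead] at hΔb
      have hda : g.del a = g.Δ :=
        GarsideStructure.le_antisymm' (GarsideStructure.le_del_delta hsa) hΔb
      exact hane1 (GarsideStructure.del_eq_delta_iff.1 hda)
  -- identify r with l.length and ly with dl
  have hrn : r = (l.length : ℤ) := le_antisymm (hsup.2 _ hxup) (hmin r hsup.1)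
  have hydl : dl.prod = y := by
    rw [hdlprod, hy, hrn, ← hprod, zpow_natCast]
  have hlyeq : ly = dl :=
    GarsideStructure.lnf_unique ly dl hlylnf.2.1 hdlchain hlylnf.1 hdlmem
      (by rw [hlyprod, hydl])
  have hLfacts : ∀ t ∈ L, g.Simple t ∧ t ≠ g.Δ := fun t ht =>
    ⟨(hLlnf.1 t ht).1, GarsideStructure.chain_ne_delta L hLlnf.2.1 hLlnf.2.2 t ht⟩
  apply GarsideStructure.match_pow ly hlylnf.1 hlylnf.2.1
    (by rw [hlyeq]; exact hdllast) k L hLfacts hLlnf.2.1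
  rw [hlyprod, hLprod]
  exact hdvd
end
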